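/- Theorem 5 (leakage-distortion region under log-loss): For the K-round interactive mechanism with log-loss distortion at both agents, the leakage-distortion region is the set of all tuples (L1, L2, D1, D2) satisfying L1 >= I(Y1; U_1,...,U_K, X2), L2 >= I(Y2; U_1,...,U_K, X1), D1 >= H(X1 | U_1,...,U_K, X2), and D2 >= H(X2 | U_1,...,U_K, X1), for some K-round interactive mechanism U_1,...,U_K. In particular, for the posterior reconstruction hatX_i = P(X_i = · | U_1,...,U_K, X_j) (j != i), the expected log-loss E[log(1/hatX_i(X_i))] equals the conditional entropy H(X_i | U_1,...,U_K, X_j). -/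

import Mathlib

/-!
Lemma 1 (monotonicity of sum leakage) for two-agent interactive privacy mechanisms.
-/

open scoped BigOperators

noncomputable section

/-- A probability mass function on a finite type. -/
def IsPMF {α : Type*} [Fintype α] (p : α → ℝ) : Prop :=
  (∀ a, 0 ≤ p a) ∧ ∑ a, p a = 1

/-- Shannon entropy (natural logarithm). -/
def Hent {α : Type*} [Fintype α] (p : α → ℝ) : ℝ :=
  ∑ a, Real.negMulLog (p a)

open Classical in
/-- Distribution (pushforward) of a random variable `f` under a joint pmf `q`. -/
def pushf {Ω α : Type*} [Fintype Ω] (q : Ω → ℝ) (f : Ω → α) : α → ℝ :=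
  fun a => ∑ ω, if f ω = a then q ω else 0

/-- Entropy of a random variable `f` under joint pmf `q`. -/
def HRV {Ω α : Type*} [Fintype Ω] [Fintype α] (q : Ω → ℝ) (f : Ω → α) : ℝ :=
  Hent (pushf q f)

/-- Mutual information `I(f;g)` under joint pmf `q`. -/
def MIrv {Ω α β : Type*} [Fintype Ω] [Fintype α] [Fintype β]
    (q : Ω → ℝ) (f : Ω → α) (g : Ω → β) : ℝ :=
  HRV q f + HRV q g - HRV q (fun ω => (f ω, g ω))

/-- A `K`-round single-letter interactive mechanism, where the agent observing the first
(public-data) argument sends in rounds `0, 2, 4, …` (`1, 3, 5, …` in 1-based numbering, i.e.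
it initiates the interaction) and the agent observing the second argument sends in rounds
`1, 3, 5, …`.  Round `k` produces an output in a finite alphabet `Fin (nU k)`, via a
conditional probability law that may depend on the sender's public data and on all the
previously exchanged outputs. -/
structure InterMech (K : ℕ) (X1 X2 : Type) where
  nU : Fin K → ℕ
  κ : (k : Fin K) → X1 → X2 → ((j : Fin K) → Fin (nU j)) → Fin (nU k) → ℝ
  nonneg : ∀ k x1 x2 u v, 0 ≤ κ k x1 x2 u v
  sum_one : ∀ k x1 x2 u, ∑ v, κ k x1 x2 u v = 1
  -- the round-`k` conditional law only depends on the outputs of rounds `j < k`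
  hist : ∀ (k : Fin K) x1 x2 u u', (∀ j : Fin K, (j : ℕ) < (k : ℕ) → u j = u' j) →
    κ k x1 x2 u = κ k x1 x2 u'
  -- in even (0-based) rounds the output is generated from `(X1, U_{<k})` only
  firstSends : ∀ (k : Fin K) x1 x2 x2' u, Even (k : ℕ) → κ k x1 x2 u = κ k x1 x2' u
  -- in odd (0-based) rounds the output is generated from `(X2, U_{<k})` only
  secondSends : ∀ (k : Fin K) x1 x1' x2 u, ¬ Even (k : ℕ) → κ k x1 x2 u = κ k x1' x2 u

/-- Joint pmf of `(X1, Y1, X2, Y2, U_1, …, U_K)` for a mechanism initiated at agent A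
(who observes `(X1,Y1)`). -/
def mjointA {X1 Y1 X2 Y2 : Type} {K : ℕ}
    (src : X1 × Y1 × X2 × Y2 → ℝ) (m : InterMech K X1 X2) :
    X1 × Y1 × X2 × Y2 × ((j : Fin K) → Fin (m.nU j)) → ℝ :=
  fun w => src (w.1, w.2.1, w.2.2.1, w.2.2.2.1) *
    ∏ k, m.κ k w.1 w.2.2.1 w.2.2.2.2 (w.2.2.2.2 k)


/-- Conditional entropy `H(f | g)` under joint pmf `q`. -/
def condEntRV {Ω α β : Type*} [Fintype Ω] [Fintype α] [Fintype β]
    (q : Ω → ℝ) (f : Ω → α) (g : Ω → β) : ℝ :=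
  HRV q (fun ω => (f ω, g ω)) - HRV q g

/-- Conditional mutual information `I(f ; g | h)` under joint pmf `q`. -/
def condMIrv {Ω α β γ : Type*} [Fintype Ω] [Fintype α] [Fintype β] [Fintype γ]
    (q : Ω → ℝ) (f : Ω → α) (g : Ω → β) (h : Ω → γ) : ℝ :=
  condEntRV q f h + condEntRV q g h - condEntRV q (fun ω => (f ω, g ω)) h

open scoped ENNReal in
open Classical in
/-- Log-loss distortion: the reproduction `xh` is a probability distribution on the
source alphabet and `d(x, xh) = log (1 / xh x)` (with value `∞` when `xh x = 0`). -/
def dLogLoss {α : Type*} (x : α) (xh : α → ℝ) : ℝ≥0∞ :=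
  if xh x = 0 then ⊤ else ENNReal.ofReal (Real.log (1 / xh x))

/-- The posterior reconstruction `x ↦ P(X1 = x | U^K = u, X2 = x2)` induced by a joint
pmf `q` on `X1 × Y1 × X2 × Y2 × U`. -/
def posterior1 {X1 Y1 X2 Y2 U : Type}
    [Fintype X1] [Fintype Y1] [Fintype X2] [Fintype Y2] [Fintype U]
    (q : X1 × Y1 × X2 × Y2 × U → ℝ) (x2 : X2) (u : U) : X1 → ℝ :=
  fun x1 => pushf q (fun w => (w.1, w.2.2.2.2, w.2.2.1)) (x1, u, x2) /
    pushf q (fun w => (w.2.2.2.2, w.2.2.1)) (u, x2)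

/-- The posterior reconstruction `x ↦ P(X2 = x | U^K = u, X1 = x1)`. -/
def posterior2 {X1 Y1 X2 Y2 U : Type}
    [Fintype X1] [Fintype Y1] [Fintype X2] [Fintype Y2] [Fintype U]
    (q : X1 × Y1 × X2 × Y2 × U → ℝ) (x1 : X1) (u : U) : X2 → ℝ :=
  fun x2 => pushf q (fun w => (w.2.2.1, w.2.2.2.2, w.1)) (x2, u, x1) /
    pushf q (fun w => (w.2.2.2.2, w.1)) (u, x1)

/-- The operational leakage-distortion region of the `K`-round interactive mechanism
under log-loss distortion: tuples `(L1, L2, D1, D2)` for which some `K`-round mechanism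
together with probability-distribution-valued reconstructions meets the expected
log-loss constraints `D1, D2` while leaking at most `L1, L2`. -/
def RegionLogLoss {X1 Y1 X2 Y2 : Type}
    [Fintype X1] [Fintype Y1] [Fintype X2] [Fintype Y2]
    (src : X1 × Y1 × X2 × Y2 → ℝ) (K : ℕ) : Set (ℝ × ℝ × ℝ × ℝ) :=
  { t | 0 ≤ t.2.2.1 ∧ 0 ≤ t.2.2.2 ∧ ∃ (m : InterMech K X1 X2)
      (g1 : X2 → ((j : Fin K) → Fin (m.nU j)) → (X1 → ℝ))
      (g2 : X1 → ((j : Fin K) → Fin (m.nU j)) → (X2 → ℝ)),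
      (∀ x2 u, IsPMF (g1 x2 u)) ∧ (∀ x1 u, IsPMF (g2 x1 u)) ∧
      (∑ w, ENNReal.ofReal (mjointA src m w) * dLogLoss w.1 (g1 w.2.2.1 w.2.2.2.2))
        ≤ ENNReal.ofReal t.2.2.1 ∧
      (∑ w, ENNReal.ofReal (mjointA src m w) * dLogLoss w.2.2.1 (g2 w.1 w.2.2.2.2))
        ≤ ENNReal.ofReal t.2.2.2 ∧
      MIrv (mjointA src m) (fun w => w.2.1) (fun w => (w.2.2.2.2, w.2.2.1)) ≤ t.1 ∧
      MIrv (mjointA src m) (fun w => w.2.2.2.1) (fun w => (w.2.2.2.2, w.1)) ≤ t.2.1 }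

/-- The single-letter characterization of the log-loss region: tuples `(L1, L2, D1, D2)`
satisfying `L1 ≥ I(Y1; U^K, X2)`, `L2 ≥ I(Y2; U^K, X1)`, `D1 ≥ H(X1 | U^K, X2)` and
`D2 ≥ H(X2 | U^K, X1)` for some `K`-round interactive mechanism. -/
def RegionEntropy {X1 Y1 X2 Y2 : Type}
    [Fintype X1] [Fintype Y1] [Fintype X2] [Fintype Y2]
    (src : X1 × Y1 × X2 × Y2 → ℝ) (K : ℕ) : Set (ℝ × ℝ × ℝ × ℝ) :=
  { t | 0 ≤ t.2.2.1 ∧ 0 ≤ t.2.2.2 ∧ ∃ m : InterMech K X1 X2,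
      MIrv (mjointA src m) (fun w => w.2.1) (fun w => (w.2.2.2.2, w.2.2.1)) ≤ t.1 ∧
      MIrv (mjointA src m) (fun w => w.2.2.2.1) (fun w => (w.2.2.2.2, w.1)) ≤ t.2.1 ∧
      condEntRV (mjointA src m) (fun w => w.1) (fun w => (w.2.2.2.2, w.2.2.1)) ≤ t.2.2.1 ∧
      condEntRV (mjointA src m) (fun w => w.2.2.1) (fun w => (w.2.2.2.2, w.1)) ≤ t.2.2.2 }

set_option linter.unusedSectionVars false
section Theorem5Aux

variable {Ω α β : Type*} [Fintype Ω] [Fintype α] [Fintype β]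

lemma pushf_nonneg (q : Ω → ℝ) (hq : ∀ w, 0 ≤ q w) (f : Ω → α) (a : α) :
    0 ≤ pushf q f a := by
  classical
  refine Finset.sum_nonneg fun w _ => ?_
  unfold pushf at *
  split <;> simp [hq w]

lemma le_pushf (q : Ω → ℝ) (hq : ∀ w, 0 ≤ q w) (f : Ω → α) (w : Ω) :
    q w ≤ pushf q f (f w) := by
  classical
  have h := Finset.single_le_sum (f := fun ω => if f ω = f w then q ω else 0)
    (fun i _ => by by_cases h : f i = f w <;> simp [h, hq i]) (Finset.mem_univ w)
  simp only [if_pos rfl] at h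
  simpa [pushf] using h

lemma sum_pushf_mul (q : Ω → ℝ) (f : Ω → α) (F : α → ℝ) :
    ∑ a, pushf q f a * F a = ∑ w, q w * F (f w) := by
  classical
  simp only [pushf, Finset.sum_mul, ite_mul, zero_mul]
  rw [Finset.sum_comm]
  simp [Finset.sum_ite_eq]

lemma sum_pushf_total (q : Ω → ℝ) (f : Ω → α) :
    ∑ a, pushf q f a = ∑ w, q w := by
  simpa using sum_pushf_mul q f fun _ => 1

lemma sum_pushf_pair (q : Ω → ℝ) (f : Ω → α) (g : Ω → β) (b : β) :
    ∑ a, pushf q (fun w => (f w, g w)) (a, b) = pushf q g b := by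
  classical
  simp only [pushf]
  rw [Finset.sum_comm]
  refine Finset.sum_congr rfl fun w _ => ?_
  simp [Prod.ext_iff, ite_and, Finset.sum_ite_eq]

lemma pair_le_marg (q : Ω → ℝ) (hq : ∀ w, 0 ≤ q w) (f : Ω → α) (g : Ω → β) (a : α) (b : β) :
    pushf q (fun w => (f w, g w)) (a, b) ≤ pushf q g b := by
  classical
  rw [← sum_pushf_pair q f g b]
  exact Finset.single_le_sum
    (f := fun a' => pushf q (fun w => (f w, g w)) (a', b))
    (fun a' _ => pushf_nonneg q hq _ _) (Finset.mem_univ a)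

lemma sum_log_eq_condEnt (q : Ω → ℝ) (f : Ω → α) (g : Ω → β) :
    ∑ w, q w * (Real.log (pushf q g (g w)) -
        Real.log (pushf q (fun w' => (f w', g w')) (f w, g w))) = condEntRV q f g := by
  classical
  set p1 : α × β → ℝ := pushf q (fun w' => (f w', g w')) with hp1
  set p2 : β → ℝ := pushf q g with hp2
  have key : ∑ w, q w * (Real.log (p2 (g w)) - Real.log (p1 (f w, g w)))
      = ∑ c : α × β, p1 c * (Real.log (p2 c.2) - Real.log (p1 c)) :=
    (sum_pushf_mul q (fun w => (f w, g w))
      (fun c => Real.log (p2 c.2) - Real.log (p1 c))).symm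
  rw [key]
  have h1 : Hent p1 = - ∑ c : α × β, p1 c * Real.log (p1 c) := by
    simp [Hent, Real.negMulLog, neg_mul]
  have h2 : Hent p2 = - ∑ c : α × β, p1 c * Real.log (p2 c.2) := by
    have : ∑ c : α × β, p1 c * Real.log (p2 c.2)
        = ∑ b, (∑ a, p1 (a, b)) * Real.log (p2 b) := by
      rw [Fintype.sum_prod_type_right]
      refine Finset.sum_congr rfl fun b _ => ?_
      rw [Finset.sum_mul]
    rw [this]
    have : ∀ b, (∑ a, p1 (a, b)) = p2 b := fun b => sum_pushf_pair q f g b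
    simp only [this]
    simp [Hent, Real.negMulLog, neg_mul]
  have expand : ∑ c : α × β, p1 c * (Real.log (p2 c.2) - Real.log (p1 c))
      = (∑ c : α × β, p1 c * Real.log (p2 c.2)) - ∑ c : α × β, p1 c * Real.log (p1 c) := by
    rw [← Finset.sum_sub_distrib]
    exact Finset.sum_congr rfl fun c _ => mul_sub _ _ _
  have hce : condEntRV q f g = Hent p1 - Hent p2 := rfl
  rw [expand, hce]
  linarith [h1, h2]

end Theorem5Aux
section Theorem5Aux2

variable {Ω α β : Type*} [Fintype Ω] [Fintype α] [Fintype β]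

lemma logloss_posterior_eq (q : Ω → ℝ) (hq : ∀ w, 0 ≤ q w) (f : Ω → α) (g : Ω → β) :
    ∑ w, ENNReal.ofReal (q w) * dLogLoss (f w)
        (fun a => pushf q (fun w' => (f w', g w')) (a, g w) / pushf q g (g w)) =
      ENNReal.ofReal (condEntRV q f g) := by
  classical
  have hterm : ∀ w, ENNReal.ofReal (q w) * dLogLoss (f w)
        (fun a => pushf q (fun w' => (f w', g w')) (a, g w) / pushf q g (g w))
      = ENNReal.ofReal (q w * (Real.log (pushf q g (g w)) -
          Real.log (pushf q (fun w' => (f w', g w')) (f w, g w)))) := by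
    intro w
    rcases eq_or_lt_of_le (hq w) with h0 | h0
    · simp [← h0]
    · have hA : 0 < pushf q (fun w' => (f w', g w')) (f w, g w) :=
        lt_of_lt_of_le h0 (le_pushf q hq _ w)
      have hB : 0 < pushf q g (g w) := lt_of_lt_of_le hA (pair_le_marg q hq f g _ _)
      have hpost : pushf q (fun w' => (f w', g w')) (f w, g w) / pushf q g (g w) ≠ 0 :=
        (div_pos hA hB).ne'
      simp only [dLogLoss, if_neg hpost]
      rw [one_div_div, Real.log_div hB.ne' hA.ne', ← ENNReal.ofReal_mul (hq w)]
  have hnn : ∀ w, 0 ≤ q w * (Real.log (pushf q g (g w)) -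
      Real.log (pushf q (fun w' => (f w', g w')) (f w, g w))) := by
    intro w
    rcases eq_or_lt_of_le (hq w) with h0 | h0
    · simp [← h0]
    · have hA : 0 < pushf q (fun w' => (f w', g w')) (f w, g w) :=
        lt_of_lt_of_le h0 (le_pushf q hq _ w)
      have hAB := pair_le_marg q hq f g (f w) (g w)
      have := Real.log_le_log hA hAB
      have hsub : 0 ≤ Real.log (pushf q g (g w)) -
          Real.log (pushf q (fun w' => (f w', g w')) (f w, g w)) := by linarith
      positivity
  calc ∑ w, ENNReal.ofReal (q w) * dLogLoss (f w)
        (fun a => pushf q (fun w' => (f w', g w')) (a, g w) / pushf q g (g w))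
      = ∑ w, ENNReal.ofReal (q w * (Real.log (pushf q g (g w)) -
          Real.log (pushf q (fun w' => (f w', g w')) (f w, g w)))) :=
        Finset.sum_congr rfl fun w _ => hterm w
    _ = ENNReal.ofReal (∑ w, q w * (Real.log (pushf q g (g w)) -
          Real.log (pushf q (fun w' => (f w', g w')) (f w, g w)))) :=
        (ENNReal.ofReal_sum_of_nonneg fun w _ => hnn w).symm
    _ = ENNReal.ofReal (condEntRV q f g) := by rw [sum_log_eq_condEnt q f g]

lemma condEnt_le_logloss (q : Ω → ℝ) (hq : ∀ w, 0 ≤ q w) (f : Ω → α) (g : Ω → β)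
    (G : β → α → ℝ) (hG : ∀ b, IsPMF (G b)) :
    ENNReal.ofReal (condEntRV q f g)
      ≤ ∑ w, ENNReal.ofReal (q w) * dLogLoss (f w) (G (g w)) := by
  classical
  by_cases hzero : ∃ w, 0 < q w ∧ G (g w) (f w) = 0
  · obtain ⟨w, hw, hGw⟩ := hzero
    have htop : ENNReal.ofReal (q w) * dLogLoss (f w) (G (g w)) = ⊤ := by
      simp only [dLogLoss, if_pos hGw]
      rw [ENNReal.mul_top]
      simpa [ENNReal.ofReal_eq_zero] using hw.not_ge
    refine le_trans le_top (le_trans (le_of_eq htop.symm) ?_)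
    exact Finset.single_le_sum
      (f := fun i => ENNReal.ofReal (q i) * dLogLoss (f i) (G (g i)))
      (fun i _ => zero_le) (Finset.mem_univ w)
  · push_neg at hzero
    have hterm : ∀ w, ENNReal.ofReal (q w) * dLogLoss (f w) (G (g w))
        = ENNReal.ofReal (q w * (- Real.log (G (g w) (f w)))) := by
      intro w
      rcases eq_or_lt_of_le (hq w) with h0 | h0
      · simp [← h0]
      · have hGpos : 0 < G (g w) (f w) :=
          lt_of_le_of_ne ((hG (g w)).1 (f w)) (Ne.symm (hzero w h0))
        simp only [dLogLoss, if_neg hGpos.ne']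
        rw [one_div, Real.log_inv, ← ENNReal.ofReal_mul (hq w)]
    have hG1 : ∀ w, G (g w) (f w) ≤ 1 := by
      intro w
      have := Finset.single_le_sum (f := fun a => G (g w) a)
        (fun a _ => (hG (g w)).1 a) (Finset.mem_univ (f w))
      simpa [(hG (g w)).2] using this
    have hnn : ∀ w, 0 ≤ q w * (- Real.log (G (g w) (f w))) := by
      intro w
      rcases eq_or_lt_of_le (hq w) with h0 | h0
      · simp [← h0]
      · have hGpos : 0 < G (g w) (f w) :=
          lt_of_le_of_ne ((hG (g w)).1 (f w)) (Ne.symm (hzero w h0))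
        have := Real.log_nonpos hGpos.le (hG1 w)
        have h1 : 0 ≤ - Real.log (G (g w) (f w)) := by linarith
        positivity
    have hreal : condEntRV q f g ≤ ∑ w, q w * (- Real.log (G (g w) (f w))) := by
      rw [← sum_log_eq_condEnt q f g]
      have hsub : ∀ w, q w * (Real.log (pushf q g (g w)) -
            Real.log (pushf q (fun w' => (f w', g w')) (f w, g w)))
            - q w * (- Real.log (G (g w) (f w)))
          ≤ q w * (pushf q g (g w) * G (g w) (f w) /
              pushf q (fun w' => (f w', g w')) (f w, g w) - 1) := by
        intro w
        rcases eq_or_lt_of_le (hq w) with h0 | h0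
        · simp [← h0]
        · have hA : 0 < pushf q (fun w' => (f w', g w')) (f w, g w) :=
            lt_of_lt_of_le h0 (le_pushf q hq _ w)
          have hB : 0 < pushf q g (g w) := lt_of_lt_of_le hA (pair_le_marg q hq f g _ _)
          have hGpos : 0 < G (g w) (f w) :=
            lt_of_le_of_ne ((hG (g w)).1 (f w)) (Ne.symm (hzero w h0))
          have hlog : Real.log (pushf q g (g w)) -
                Real.log (pushf q (fun w' => (f w', g w')) (f w, g w))
                + Real.log (G (g w) (f w))
              = Real.log (pushf q g (g w) * G (g w) (f w) /
                  pushf q (fun w' => (f w', g w')) (f w, g w)) := by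
            rw [Real.log_div (by positivity) hA.ne', Real.log_mul hB.ne' hGpos.ne']
            ring
          have hle := Real.log_le_sub_one_of_pos
            (show 0 < pushf q g (g w) * G (g w) (f w) /
                pushf q (fun w' => (f w', g w')) (f w, g w) by positivity)
          have := mul_le_mul_of_nonneg_left hle (hq w)
          rw [← hlog] at this
          linarith [this]
      have hsum1 := Finset.sum_le_sum fun w (_ : w ∈ Finset.univ) => hsub w
      have hsplit : ∑ w, (q w * (Real.log (pushf q g (g w)) -
            Real.log (pushf q (fun w' => (f w', g w')) (f w, g w)))
            - q w * (- Real.log (G (g w) (f w))))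
          = (∑ w, q w * (Real.log (pushf q g (g w)) -
            Real.log (pushf q (fun w' => (f w', g w')) (f w, g w))))
            - ∑ w, q w * (- Real.log (G (g w) (f w))) := Finset.sum_sub_distrib _ _
      have e1 : ∑ w, q w * (pushf q g (g w) * G (g w) (f w) /
            pushf q (fun w' => (f w', g w')) (f w, g w) - 1)
          = (∑ w, q w * (pushf q g (g w) * G (g w) (f w) /
            pushf q (fun w' => (f w', g w')) (f w, g w))) - ∑ w, q w := by
        rw [← Finset.sum_sub_distrib]
        exact Finset.sum_congr rfl fun w _ => by ring
      have e2 : ∑ w, q w * (pushf q g (g w) * G (g w) (f w) /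
            pushf q (fun w' => (f w', g w')) (f w, g w))
          = ∑ c : α × β, pushf q (fun w' => (f w', g w')) c *
              (pushf q g c.2 * G c.2 c.1 / pushf q (fun w' => (f w', g w')) c) :=
        (sum_pushf_mul q (fun w => (f w, g w))
          (fun c => pushf q g c.2 * G c.2 c.1 / pushf q (fun w' => (f w', g w')) c)).symm
      have e3 : ∑ c : α × β, pushf q (fun w' => (f w', g w')) c *
            (pushf q g c.2 * G c.2 c.1 / pushf q (fun w' => (f w', g w')) c)
          ≤ ∑ c : α × β, pushf q g c.2 * G c.2 c.1 := by
        refine Finset.sum_le_sum fun c _ => ?_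
        rcases eq_or_lt_of_le (pushf_nonneg q hq (fun w' => (f w', g w')) c) with h0 | h0
        · rw [← h0, zero_mul]
          exact mul_nonneg (pushf_nonneg q hq g c.2) ((hG c.2).1 c.1)
        · rw [mul_comm, div_mul_cancel₀ _ h0.ne']
      have e4 : ∑ c : α × β, pushf q g c.2 * G c.2 c.1 = ∑ w, q w := by
        rw [Fintype.sum_prod_type_right]
        have hb : ∀ b : β, ∑ a, pushf q g (a, b).2 * G (a, b).2 (a, b).1 = pushf q g b := by
          intro b
          simp only
          rw [← Finset.mul_sum, (hG b).2, mul_one]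
        rw [Finset.sum_congr rfl fun b _ => hb b]
        exact sum_pushf_total q g
      linarith
    calc ENNReal.ofReal (condEntRV q f g)
        ≤ ENNReal.ofReal (∑ w, q w * (- Real.log (G (g w) (f w)))) :=
          ENNReal.ofReal_le_ofReal hreal
      _ = ∑ w, ENNReal.ofReal (q w * (- Real.log (G (g w) (f w)))) :=
          ENNReal.ofReal_sum_of_nonneg fun w _ => hnn w
      _ = ∑ w, ENNReal.ofReal (q w) * dLogLoss (f w) (G (g w)) :=
          Finset.sum_congr rfl fun w _ => (hterm w).symm

end Theorem5Aux2
/-- **Theorem 5 (leakage-distortion region under log-loss).**  The operational log-loss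
leakage-distortion region of the `K`-round interactive mechanism coincides with the set
of tuples `(L1, L2, D1, D2)` with `L1 ≥ I(Y1; U^K, X2)`, `L2 ≥ I(Y2; U^K, X1)`,
`D1 ≥ H(X1 | U^K, X2)`, `D2 ≥ H(X2 | U^K, X1)` for some `K`-round mechanism; in
particular, for the posterior reconstructions the expected log-loss equals the
corresponding conditional entropy. -/
theorem theorem5_logloss_region
    {X1 Y1 X2 Y2 : Type}
    [Fintype X1] [Fintype Y1] [Fintype X2] [Fintype Y2]
    (src : X1 × Y1 × X2 × Y2 → ℝ) (hsrc : IsPMF src) (K : ℕ) :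
    RegionLogLoss src K = RegionEntropy src K ∧
    (∀ m : InterMech K X1 X2,
      (∑ w, ENNReal.ofReal (mjointA src m w) *
          dLogLoss w.1 (posterior1 (mjointA src m) w.2.2.1 w.2.2.2.2)) =
        ENNReal.ofReal (condEntRV (mjointA src m)
          (fun w => w.1) (fun w => (w.2.2.2.2, w.2.2.1))) ∧
      (∑ w, ENNReal.ofReal (mjointA src m w) *
          dLogLoss w.2.2.1 (posterior2 (mjointA src m) w.1 w.2.2.2.2)) =
        ENNReal.ofReal (condEntRV (mjointA src m)
          (fun w => w.2.2.1) (fun w => (w.2.2.2.2, w.1)))) := by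
  classical
  have hqnn : ∀ (m : InterMech K X1 X2) w, 0 ≤ mjointA src m w := fun m w =>
    mul_nonneg (hsrc.1 _) (Finset.prod_nonneg fun k _ => m.nonneg _ _ _ _ _)
  have hΩne : Nonempty (X1 × Y1 × X2 × Y2) := by
    by_contra h
    rw [not_nonempty_iff] at h
    have h2 := hsrc.2
    rw [Finset.univ_eq_empty, Finset.sum_empty] at h2
    exact one_ne_zero h2.symm
  obtain ⟨⟨x10, y10, x20, y20⟩⟩ := hΩne
  haveI : Nonempty X1 := ⟨x10⟩
  haveI : Nonempty X2 := ⟨x20⟩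
  have heqA : ∀ m : InterMech K X1 X2,
      (∑ w, ENNReal.ofReal (mjointA src m w) *
          dLogLoss w.1 (posterior1 (mjointA src m) w.2.2.1 w.2.2.2.2)) =
        ENNReal.ofReal (condEntRV (mjointA src m)
          (fun w => w.1) (fun w => (w.2.2.2.2, w.2.2.1))) := fun m =>
    logloss_posterior_eq (mjointA src m) (hqnn m)
      (fun w => w.1) (fun w => (w.2.2.2.2, w.2.2.1))
  have heqB : ∀ m : InterMech K X1 X2,
      (∑ w, ENNReal.ofReal (mjointA src m w) *
          dLogLoss w.2.2.1 (posterior2 (mjointA src m) w.1 w.2.2.2.2)) =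
        ENNReal.ofReal (condEntRV (mjointA src m)
          (fun w => w.2.2.1) (fun w => (w.2.2.2.2, w.1))) := fun m =>
    logloss_posterior_eq (mjointA src m) (hqnn m)
      (fun w => w.2.2.1) (fun w => (w.2.2.2.2, w.1))
  refine ⟨?_, fun m => ⟨heqA m, heqB m⟩⟩
  ext t
  constructor
  · rintro ⟨hD1, hD2, m, g1, g2, hg1, hg2, hl1, hl2, hM1, hM2⟩
    refine ⟨hD1, hD2, m, hM1, hM2, ?_, ?_⟩
    · have hle := condEnt_le_logloss (mjointA src m) (hqnn m)
        (fun w => w.1) (fun w => (w.2.2.2.2, w.2.2.1))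
        (fun b => g1 b.2 b.1) (fun b => hg1 b.2 b.1)
      exact (ENNReal.ofReal_le_ofReal_iff hD1).mp (le_trans hle hl1)
    · have hle := condEnt_le_logloss (mjointA src m) (hqnn m)
        (fun w => w.2.2.1) (fun w => (w.2.2.2.2, w.1))
        (fun b => g2 b.2 b.1) (fun b => hg2 b.2 b.1)
      exact (ENNReal.ofReal_le_ofReal_iff hD2).mp (le_trans hle hl2)
  · rintro ⟨hD1, hD2, m, hM1, hM2, hC1, hC2⟩
    refine ⟨hD1, hD2, m,
      (fun x2 u => if pushf (mjointA src m) (fun w => (w.2.2.2.2, w.2.2.1)) (u, x2) = 0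
        then (fun _ => (Fintype.card X1 : ℝ)⁻¹) else posterior1 (mjointA src m) x2 u),
      (fun x1 u => if pushf (mjointA src m) (fun w => (w.2.2.2.2, w.1)) (u, x1) = 0
        then (fun _ => (Fintype.card X2 : ℝ)⁻¹) else posterior2 (mjointA src m) x1 u),
      ?_, ?_, ?_, ?_, hM1, hM2⟩
    · intro x2 u
      dsimp only
      by_cases h0 : pushf (mjointA src m) (fun w => (w.2.2.2.2, w.2.2.1)) (u, x2) = 0
      · rw [if_pos h0]
        refine ⟨fun a => by positivity, ?_⟩
        rw [Finset.sum_const, nsmul_eq_mul, Finset.card_univ]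
        exact mul_inv_cancel₀ (Nat.cast_ne_zero.mpr Fintype.card_ne_zero)
      · rw [if_neg h0]
        refine ⟨fun a => div_nonneg (pushf_nonneg _ (hqnn m) _ _)
          (pushf_nonneg _ (hqnn m) _ _), ?_⟩
        have hs : ∑ x1, pushf (mjointA src m)
              (fun w => (w.1, w.2.2.2.2, w.2.2.1)) (x1, (u, x2))
            = pushf (mjointA src m) (fun w => (w.2.2.2.2, w.2.2.1)) (u, x2) :=
          sum_pushf_pair (mjointA src m) (fun w => w.1)
            (fun w => (w.2.2.2.2, w.2.2.1)) (u, x2)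
        simp only [posterior1]
        rw [← Finset.sum_div, hs, div_self h0]
    · intro x1 u
      dsimp only
      by_cases h0 : pushf (mjointA src m) (fun w => (w.2.2.2.2, w.1)) (u, x1) = 0
      · rw [if_pos h0]
        refine ⟨fun a => by positivity, ?_⟩
        rw [Finset.sum_const, nsmul_eq_mul, Finset.card_univ]
        exact mul_inv_cancel₀ (Nat.cast_ne_zero.mpr Fintype.card_ne_zero)
      · rw [if_neg h0]
        refine ⟨fun a => div_nonneg (pushf_nonneg _ (hqnn m) _ _)
          (pushf_nonneg _ (hqnn m) _ _), ?_⟩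
        have hs : ∑ x2, pushf (mjointA src m)
              (fun w => (w.2.2.1, w.2.2.2.2, w.1)) (x2, (u, x1))
            = pushf (mjointA src m) (fun w => (w.2.2.2.2, w.1)) (u, x1) :=
          sum_pushf_pair (mjointA src m) (fun w => w.2.2.1)
            (fun w => (w.2.2.2.2, w.1)) (u, x1)
        simp only [posterior2]
        rw [← Finset.sum_div, hs, div_self h0]
    · have hcongr : ∀ w : X1 × Y1 × X2 × Y2 × ((j : Fin K) → Fin (m.nU j)),
          ENNReal.ofReal (mjointA src m w) * dLogLoss w.1
            (if pushf (mjointA src m) (fun w' => (w'.2.2.2.2, w'.2.2.1))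
                (w.2.2.2.2, w.2.2.1) = 0
              then (fun _ => (Fintype.card X1 : ℝ)⁻¹)
              else posterior1 (mjointA src m) w.2.2.1 w.2.2.2.2)
          = ENNReal.ofReal (mjointA src m w) * dLogLoss w.1
              (posterior1 (mjointA src m) w.2.2.1 w.2.2.2.2) := by
        intro w
        by_cases h0 : pushf (mjointA src m) (fun w' => (w'.2.2.2.2, w'.2.2.1))
            (w.2.2.2.2, w.2.2.1) = 0
        · have h1 := le_pushf (mjointA src m) (hqnn m)
            (fun w' => (w'.1, w'.2.2.2.2, w'.2.2.1)) w
          have h2 := pair_le_marg (mjointA src m) (hqnn m)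
            (fun w' => w'.1) (fun w' => (w'.2.2.2.2, w'.2.2.1)) w.1 (w.2.2.2.2, w.2.2.1)
          have hqw : mjointA src m w = 0 :=
            le_antisymm (h0 ▸ le_trans h1 h2) (hqnn m w)
          simp [hqw]
        · rw [if_neg h0]
      dsimp only
      calc ∑ w, ENNReal.ofReal (mjointA src m w) * dLogLoss w.1
            (if pushf (mjointA src m) (fun w' => (w'.2.2.2.2, w'.2.2.1))
                (w.2.2.2.2, w.2.2.1) = 0
              then (fun _ => (Fintype.card X1 : ℝ)⁻¹)
              else posterior1 (mjointA src m) w.2.2.1 w.2.2.2.2)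
          = ∑ w, ENNReal.ofReal (mjointA src m w) * dLogLoss w.1
              (posterior1 (mjointA src m) w.2.2.1 w.2.2.2.2) :=
            Finset.sum_congr rfl fun w _ => hcongr w
        _ = ENNReal.ofReal (condEntRV (mjointA src m)
              (fun w => w.1) (fun w => (w.2.2.2.2, w.2.2.1))) := heqA m
        _ ≤ ENNReal.ofReal t.2.2.1 := ENNReal.ofReal_le_ofReal hC1
    · have hcongr : ∀ w : X1 × Y1 × X2 × Y2 × ((j : Fin K) → Fin (m.nU j)),
          ENNReal.ofReal (mjointA src m w) * dLogLoss w.2.2.1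
            (if pushf (mjointA src m) (fun w' => (w'.2.2.2.2, w'.1))
                (w.2.2.2.2, w.1) = 0
              then (fun _ => (Fintype.card X2 : ℝ)⁻¹)
              else posterior2 (mjointA src m) w.1 w.2.2.2.2)
          = ENNReal.ofReal (mjointA src m w) * dLogLoss w.2.2.1
              (posterior2 (mjointA src m) w.1 w.2.2.2.2) := by
        intro w
        by_cases h0 : pushf (mjointA src m) (fun w' => (w'.2.2.2.2, w'.1))
            (w.2.2.2.2, w.1) = 0
        · have h1 := le_pushf (mjointA src m) (hqnn m)
            (fun w' => (w'.2.2.1, w'.2.2.2.2, w'.1)) w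
          have h2 := pair_le_marg (mjointA src m) (hqnn m)
            (fun w' => w'.2.2.1) (fun w' => (w'.2.2.2.2, w'.1)) w.2.2.1 (w.2.2.2.2, w.1)
          have hqw : mjointA src m w = 0 :=
            le_antisymm (h0 ▸ le_trans h1 h2) (hqnn m w)
          simp [hqw]
        · rw [if_neg h0]
      dsimp only
      calc ∑ w, ENNReal.ofReal (mjointA src m w) * dLogLoss w.2.2.1
            (if pushf (mjointA src m) (fun w' => (w'.2.2.2.2, w'.1))
                (w.2.2.2.2, w.1) = 0
              then (fun _ => (Fintype.card X2 : ℝ)⁻¹)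
              else posterior2 (mjointA src m) w.1 w.2.2.2.2)
          = ∑ w, ENNReal.ofReal (mjointA src m w) * dLogLoss w.2.2.1
              (posterior2 (mjointA src m) w.1 w.2.2.2.2) :=
            Finset.sum_congr rfl fun w _ => hcongr w
        _ = ENNReal.ofReal (condEntRV (mjointA src m)
              (fun w => w.2.2.1) (fun w => (w.2.2.2.2, w.1))) := heqB m
        _ ≤ ENNReal.ofReal t.2.2.2 := ENNReal.ofReal_le_ofReal hC2

end
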